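/- Let R be a finite set with |R| = N, let L be a finite index set, let Δ ≥ 1 be an integer with Δ ≤ N, and for each u ∈ L let S_u ⊆ R satisfy |S_u| ≥ Δ. Then there exists a subset Z ⊆ R such that |Z| ≤ 3·N/Δ and ∑_{u ∈ L : S_u ∩ Z = ∅} |S_u| ≤ 3·Δ·|L|. -/

import Mathlib

lemma aux_total {α : Type} [DecidableEq α] (R : Finset α) (p q : ℝ) (h : p + q = 1) :
    ∑ Z ∈ R.powerset, p ^ Z.card * q ^ (R.card - Z.card) = 1 := by
  have H := Finset.prod_add (fun _ : α => p) (fun _ : α => q) R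
  simp only [Finset.prod_const, h, one_pow] at H
  rw [H]
  refine Finset.sum_congr rfl fun Z hZ => ?_
  rw [Finset.card_sdiff_of_subset (Finset.mem_powerset.mp hZ)]

lemma aux_miss {α : Type} [DecidableEq α] (R T : Finset α) (hT : T ⊆ R) (p q : ℝ)
    (h : p + q = 1) :
    ∑ Z ∈ R.powerset.filter (fun Z => T ∩ Z = ∅), p ^ Z.card * q ^ (R.card - Z.card)
      = q ^ T.card := by
  have hset : R.powerset.filter (fun Z => T ∩ Z = ∅) = (R \ T).powerset := by
    ext Z
    simp only [Finset.mem_filter, Finset.mem_powerset, Finset.subset_sdiff,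
      ← Finset.disjoint_iff_inter_eq_empty, Finset.disjoint_left, and_comm]
    constructor <;> rintro ⟨h1, h2⟩ <;> exact ⟨h1, fun a ha hb => h2 hb ha⟩
  rw [hset]
  have key : ∀ Z ∈ (R \ T).powerset,
      p ^ Z.card * q ^ (R.card - Z.card)
        = q ^ T.card * (p ^ Z.card * q ^ ((R \ T).card - Z.card)) := by
    intro Z hZ
    have hZc : Z.card ≤ (R \ T).card := Finset.card_le_card (Finset.mem_powerset.mp hZ)
    have hTc : T.card ≤ R.card := Finset.card_le_card hT
    have hcard : (R \ T).card = R.card - T.card := Finset.card_sdiff_of_subset hT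
    have : R.card - Z.card = ((R \ T).card - Z.card) + T.card := by omega
    rw [this, pow_add]; ring
  rw [Finset.sum_congr rfl key, ← Finset.mul_sum, aux_total _ p q h, mul_one]

lemma aux_mem {α : Type} [DecidableEq α] (R : Finset α) (x : α) (hx : x ∈ R) (p q : ℝ)
    (h : p + q = 1) :
    ∑ Z ∈ R.powerset.filter (fun Z => x ∈ Z), p ^ Z.card * q ^ (R.card - Z.card) = p := by
  have hmiss := aux_miss R {x} (Finset.singleton_subset_iff.mpr hx) p q h
  rw [Finset.card_singleton, pow_one] at hmiss
  have hsplit := Finset.sum_filter_add_sum_filter_not R.powerset (fun Z => x ∈ Z)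
    (fun Z => p ^ Z.card * q ^ (R.card - Z.card))
  rw [aux_total R p q h] at hsplit
  have heq : R.powerset.filter (fun Z => ¬ x ∈ Z)
      = R.powerset.filter (fun Z => ({x} : Finset α) ∩ Z = ∅) := by
    apply Finset.filter_congr
    intro Z _
    constructor
    · exact fun hxZ => Finset.singleton_inter_of_notMem hxZ
    · intro hE hxZ
      have : x ∈ ({x} : Finset α) ∩ Z := Finset.mem_inter.mpr ⟨Finset.mem_singleton_self x, hxZ⟩
      rw [hE] at this
      exact absurd this (Finset.notMem_empty x)
  rw [heq, hmiss] at hsplit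
  linarith

lemma aux_card {α : Type} [DecidableEq α] (R : Finset α) (p q : ℝ) (h : p + q = 1) :
    ∑ Z ∈ R.powerset, (p ^ Z.card * q ^ (R.card - Z.card)) * Z.card
      = R.card * p := by
  have step1 : ∀ Z ∈ R.powerset,
      (p ^ Z.card * q ^ (R.card - Z.card)) * Z.card
        = ∑ x ∈ R, (if x ∈ Z then p ^ Z.card * q ^ (R.card - Z.card) else 0) := by
    intro Z hZ
    rw [← Finset.sum_filter]
    have : R.filter (fun x => x ∈ Z) = Z := by
      rw [Finset.filter_mem_eq_inter, Finset.inter_eq_right]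
      exact Finset.mem_powerset.mp hZ
    rw [this, Finset.sum_const, nsmul_eq_mul, mul_comm]
  rw [Finset.sum_congr rfl step1, Finset.sum_comm]
  have step2 : ∀ x ∈ R,
      (∑ Z ∈ R.powerset, if x ∈ Z then p ^ Z.card * q ^ (R.card - Z.card) else 0) = p := by
    intro x hx
    rw [← Finset.sum_filter]
    exact aux_mem R x hx p q h
  rw [Finset.sum_congr rfl step2, Finset.sum_const, nsmul_eq_mul]

lemma aux_decay (Δ s : ℕ) (h1 : 1 ≤ Δ) (_hs : Δ ≤ s) :
    (s : ℝ) * (1 - 1 / Δ) ^ s ≤ Δ := by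
  have hΔ : (0:ℝ) < Δ := by exact_mod_cast h1
  set x : ℝ := 1 / Δ with hx
  have hx0 : 0 < x := by positivity
  have hx1 : x ≤ 1 := by rw [hx, div_le_one hΔ]; exact_mod_cast h1
  have hq0 : (0:ℝ) ≤ 1 - x := by linarith
  have h2 : (1 - x) ^ s ≤ Real.exp (-x) ^ s := by
    apply pow_le_pow_left₀ hq0
    have := Real.add_one_le_exp (-x)
    linarith
  have h3 : Real.exp (-x) ^ s = Real.exp (-(s * x)) := by
    rw [← Real.exp_nat_mul]; ring_nf
  have h4 : (s:ℝ) * x ≤ Real.exp (s * x) := by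
    have := Real.add_one_le_exp ((s:ℝ) * x)
    linarith
  have h5 : (s:ℝ) * Real.exp (-(s * x)) ≤ Δ := by
    rw [Real.exp_neg, mul_comm ((s:ℝ)) _, inv_mul_le_iff₀ (Real.exp_pos _)]
    have hΔx : (Δ:ℝ) * x = 1 := by rw [hx]; field_simp
    calc (s:ℝ) = Δ * (s * x) := by
          rw [show (Δ:ℝ) * ((s:ℝ) * x) = ((Δ:ℝ) * x) * (s:ℝ) by ring, hΔx, one_mul]
    _ ≤ Δ * Real.exp (s * x) := by nlinarith
    _ = Real.exp (s * x) * Δ := by ring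
  calc (s:ℝ) * (1 - x) ^ s ≤ (s:ℝ) * Real.exp (-x) ^ s := by
        apply mul_le_mul_of_nonneg_left h2 (by positivity)
  _ = (s:ℝ) * Real.exp (-(s * x)) := by rw [h3]
  _ ≤ Δ := h5

/-- Let `R` be a finite set with `|R| = N`, `L` a finite index set,
`1 ≤ Δ ≤ N` an integer, and for each `u ∈ L` let `S u ⊆ R` with `|S u| ≥ Δ`. Then there is
a subset `Z ⊆ R` with `|Z| ≤ 3·N/Δ` such that the total size of the sets `S u` (for `u ∈ L`)
missed by `Z` is at most `3·Δ·|L|`. -/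
theorem soft_hitting_set_exists
    {α : Type} {ι : Type} [DecidableEq α]
    (R : Finset α) (L : Finset ι) (N Δ : ℕ)
    (hN : R.card = N) (hΔ1 : 1 ≤ Δ) (hΔN : Δ ≤ N)
    (S : ι → Finset α) (hSR : ∀ u ∈ L, S u ⊆ R) (hSΔ : ∀ u ∈ L, Δ ≤ (S u).card) :
    ∃ Z : Finset α, Z ⊆ R ∧ (Z.card : ℝ) ≤ 3 * N / Δ ∧
      (∑ u ∈ L.filter (fun u => S u ∩ Z = ∅), ((S u).card : ℝ)) ≤ 3 * Δ * L.card := by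
  have hΔR : (0:ℝ) < Δ := by exact_mod_cast hΔ1
  have hNR : (0:ℝ) < N := by
    have : 1 ≤ N := le_trans hΔ1 hΔN
    exact_mod_cast this
  rcases Finset.eq_empty_or_nonempty L with hL | hL
  · refine ⟨∅, Finset.empty_subset R, ?_, ?_⟩
    · simp; positivity
    · simp [hL]
  have hLR : (1:ℝ) ≤ L.card := by exact_mod_cast Finset.card_pos.mpr hL
  set p : ℝ := 1 / Δ with hp
  set q : ℝ := 1 - p with hq
  have hpq : p + q = 1 := by rw [hq]; ring
  have hp0 : 0 < p := by positivity
  have hq0 : 0 ≤ q := by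
    rw [hq, hp, sub_nonneg, div_le_one hΔR]
    exact_mod_cast hΔ1
  set w : Finset α → ℝ := fun Z => p ^ Z.card * q ^ (R.card - Z.card) with hw
  have hw0 : ∀ Z, 0 ≤ w Z := fun Z => by positivity
  set W : Finset α → ℝ :=
    fun Z => ∑ u ∈ L.filter (fun u => S u ∩ Z = ∅), ((S u).card : ℝ) with hW
  have hW0 : ∀ Z, 0 ≤ W Z := fun Z => Finset.sum_nonneg fun u _ => by positivity
  set F : Finset α → ℝ := fun Z => (Δ:ℝ) * Δ * L.card * Z.card + N * W Z with hF
  -- expected weight of missed sets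
  have hEW : ∑ Z ∈ R.powerset, w Z * W Z ≤ Δ * L.card := by
    have swap : ∑ Z ∈ R.powerset, w Z * W Z
        = ∑ u ∈ L, ((S u).card : ℝ) *
            ∑ Z ∈ R.powerset.filter (fun Z => S u ∩ Z = ∅), w Z := by
      simp only [hW, Finset.sum_filter, Finset.mul_sum]
      rw [Finset.sum_comm]
      refine Finset.sum_congr rfl fun u _ => ?_
      refine Finset.sum_congr rfl fun Z _ => ?_
      split <;> simp [mul_comm]
    rw [swap]
    have hterm : ∀ u ∈ L, ((S u).card : ℝ) *
        (∑ Z ∈ R.powerset.filter (fun Z => S u ∩ Z = ∅), w Z) ≤ Δ := by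
      intro u hu
      simp only [hw]
      rw [aux_miss R (S u) (hSR u hu) p q hpq]
      have := aux_decay Δ (S u).card hΔ1 (hSΔ u hu)
      rw [hq, hp]
      exact this
    calc ∑ u ∈ L, ((S u).card : ℝ) *
          (∑ Z ∈ R.powerset.filter (fun Z => S u ∩ Z = ∅), w Z)
        ≤ ∑ u ∈ L, (Δ:ℝ) := Finset.sum_le_sum hterm
      _ = Δ * L.card := by rw [Finset.sum_const, nsmul_eq_mul]; ring
  -- expected cardinality
  have hEC : ∑ Z ∈ R.powerset, w Z * Z.card = N * p := by
    have h := aux_card R p q hpq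
    calc ∑ Z ∈ R.powerset, w Z * Z.card = (R.card : ℝ) * p := h
      _ = N * p := by rw [hN]
  -- expectation of F
  have hEF : ∑ Z ∈ R.powerset, w Z * F Z ≤ 2 * N * Δ * L.card := by
    have expand : ∑ Z ∈ R.powerset, w Z * F Z
        = (Δ:ℝ) * Δ * L.card * (∑ Z ∈ R.powerset, w Z * Z.card)
          + N * (∑ Z ∈ R.powerset, w Z * W Z) := by
      rw [Finset.mul_sum, Finset.mul_sum, ← Finset.sum_add_distrib]
      refine Finset.sum_congr rfl fun Z _ => ?_
      rw [hF]; ring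
    rw [expand, hEC]
    have h1 : (Δ:ℝ) * Δ * L.card * (N * p) = N * Δ * L.card := by
      rw [hp]; field_simp
    rw [h1]
    nlinarith [hEW, hNR]
  -- existence of a good Z
  have hexists : ∃ Z ∈ R.powerset, F Z ≤ 2 * N * Δ * L.card := by
    by_contra hc
    push_neg at hc
    have hlt : ∑ Z ∈ R.powerset, w Z * (2 * N * Δ * L.card)
        < ∑ Z ∈ R.powerset, w Z * F Z := by
      apply Finset.sum_lt_sum
      · exact fun Z hZ => mul_le_mul_of_nonneg_left (hc Z hZ).le (hw0 Z)
      · refine ⟨R, Finset.mem_powerset_self R, ?_⟩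
        have hwR : 0 < w R := by
          simp only [hw, Nat.sub_self, pow_zero, mul_one]; positivity
        exact mul_lt_mul_of_pos_left (hc R (Finset.mem_powerset_self R)) hwR
    rw [← Finset.sum_mul] at hlt
    have htot : ∑ Z ∈ R.powerset, w Z = 1 := by rw [hw]; exact aux_total R p q hpq
    rw [htot, one_mul] at hlt
    linarith
  obtain ⟨Z, hZmem, hZF⟩ := hexists
  simp only [hF] at hZF
  refine ⟨Z, Finset.mem_powerset.mp hZmem, ?_, ?_⟩
  · -- cardinality bound
    have h1 : (Δ:ℝ) * Δ * L.card * Z.card ≤ 2 * N * Δ * L.card := by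
      nlinarith [hW0 Z, hNR]
    rw [le_div_iff₀ hΔR]
    nlinarith [h1, hNR, mul_pos hΔR (show (0:ℝ) < L.card by linarith)]
  · -- missed weight bound
    have h2 : (N:ℝ) * W Z ≤ 2 * N * Δ * L.card := by
      nlinarith [mul_nonneg (mul_nonneg (mul_nonneg hΔR.le hΔR.le)
        (show (0:ℝ) ≤ L.card by linarith)) (show (0:ℝ) ≤ (Z.card:ℝ) by positivity)]
    have : W Z ≤ 2 * Δ * L.card := by
      have := le_of_mul_le_mul_left (by linarith : (N:ℝ) * W Z ≤ N * (2 * Δ * L.card)) hNR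
      linarith
    calc (∑ u ∈ L.filter (fun u => S u ∩ Z = ∅), ((S u).card : ℝ)) = W Z := rfl
      _ ≤ 2 * Δ * L.card := this
      _ ≤ 3 * Δ * L.card := by nlinarith [hΔR, hLR]
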